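/- arXiv:1910.14130 — 2 statements merged into one kernel-verified Lean document; each statement's English description precedes it below -/
import Mathlib

section
/- Let Y, Z, U be binary, with f(Y=1|Z,U) = expit(β₀ + β_z Z + δU) and f(Z=1|U) = expit(α₀ + γU), where δ and γ are fixed known constants. If two parameter vectors (β₀⁽¹⁾, β_z⁽¹⁾, α₀⁽¹⁾) and (β₀⁽²⁾, β_z⁽²⁾, α₀⁽²⁾), together with the same distribution for U, induce the same observed-data likelihood L(Y=y, Z=z) for all (y,z) ∈ {0,1}², then β₀⁽¹⁾ = β₀⁽²⁾, β_z⁽¹⁾ = β_z⁽²⁾, and α₀⁽¹⁾ = α₀⁽²⁾. -/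
open Real

noncomputable def expit (x : ℝ) : ℝ := Real.exp x / (1 + Real.exp x)

/-- Bernoulli likelihood contribution: probability of observing `y ∈ {0,1}`
when the success probability is `q`. -/
noncomputable def bern (y : Fin 2) (q : ℝ) : ℝ := if y = 1 then q else 1 - q

lemma expit_pos (x : ℝ) : 0 < expit x := by
  unfold expit
  have := Real.exp_pos x
  positivity

lemma expit_lt_one (x : ℝ) : expit x < 1 := by
  unfold expit
  rw [div_lt_one (by positivity)]
  linarith [Real.exp_pos x]

lemma expit_strictMono : StrictMono expit := by
  intro x y h
  unfold expit
  rw [div_lt_div_iff₀ (by positivity) (by positivity)]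
  have hx := Real.exp_pos x
  have hy := Real.exp_pos y
  have := Real.exp_lt_exp.mpr h
  nlinarith

lemma key (w0 w1 c a b : ℝ) (h0 : 0 ≤ w0) (h1 : 0 ≤ w1) (hpos : 0 < w0 + w1)
    (h : expit a * w0 + expit (a + c) * w1 = expit b * w0 + expit (b + c) * w1) :
    a = b := by
  have hw : 0 < w0 ∨ 0 < w1 := by
    by_contra hc; push_neg at hc; linarith [hc.1, hc.2]
  have main : ∀ x y : ℝ, x < y →
      expit x * w0 + expit (x + c) * w1 < expit y * w0 + expit (y + c) * w1 := by
    intro x y hxy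
    have m0 : expit x * w0 ≤ expit y * w0 :=
      mul_le_mul_of_nonneg_right (expit_strictMono hxy).le h0
    have m1 : expit (x + c) * w1 ≤ expit (y + c) * w1 :=
      mul_le_mul_of_nonneg_right (expit_strictMono (by linarith)).le h1
    rcases hw with hw | hw
    · have : expit x * w0 < expit y * w0 :=
        mul_lt_mul_of_pos_right (expit_strictMono hxy) hw
      linarith
    · have : expit (x + c) * w1 < expit (y + c) * w1 :=
        mul_lt_mul_of_pos_right (expit_strictMono (by linarith)) hw
      linarith
  rcases lt_trichotomy a b with hab | hab | hab
  · exact absurd h (ne_of_lt (main a b hab))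
  · exact hab
  · exact absurd h.symm (ne_of_lt (main b a hab))

/-- Identification: with binary `Y, Z, U`,
`P(Y=1|Z,U) = expit (β₀ + β_z Z + δ U)`, `P(Z=1|U) = expit (α₀ + γ U)`, `δ, γ`
fixed, and a fixed distribution `ξ` for `U`, two parameter vectors inducing the
same observed-data likelihood must coincide: `β₀, β_z, α₀` are identified. -/
theorem identification_binary
    (δ γ : ℝ) (ξ : Fin 2 → ℝ) (hξ0 : ∀ u, 0 ≤ ξ u) (hξ1 : ∑ u : Fin 2, ξ u = 1)
    (β₀₁ βz₁ α₀₁ β₀₂ βz₂ α₀₂ : ℝ)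
    (hlik : ∀ y z : Fin 2,
      (∑ u : Fin 2, bern y (expit (β₀₁ + βz₁ * (z : ℝ) + δ * (u : ℝ))) *
        bern z (expit (α₀₁ + γ * (u : ℝ))) * ξ u) =
      (∑ u : Fin 2, bern y (expit (β₀₂ + βz₂ * (z : ℝ) + δ * (u : ℝ))) *
        bern z (expit (α₀₂ + γ * (u : ℝ))) * ξ u)) :
    β₀₁ = β₀₂ ∧ βz₁ = βz₂ ∧ α₀₁ = α₀₂ := by
  have h11 := hlik 1 1
  have h01 := hlik 0 1
  have h10 := hlik 1 0
  simp only [Fin.sum_univ_two, bern, Fin.isValue, if_pos, if_true,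
    show ((0 : Fin 2) : ℝ) = 0 by norm_num, show ((1 : Fin 2) : ℝ) = 1 by norm_num,
    show (0 : Fin 2) ≠ 1 by decide, if_neg, ite_true, ite_false, reduceIte,
    mul_zero, add_zero, mul_one] at h11 h01 h10
  rw [Fin.sum_univ_two] at hξ1
  have hξor : 0 < ξ 0 ∨ 0 < ξ 1 := by
    by_contra hc; push_neg at hc; have := hξ0 0; have := hξ0 1; linarith [hc.1, hc.2]
  -- Step 1: identify α₀
  have hα : α₀₁ = α₀₂ := by
    apply key (ξ 0) (ξ 1) γ _ _ (hξ0 0) (hξ0 1) (by linarith)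
    linarith [h11, h01]
  subst hα
  -- Step 2: identify β₀ using z = 0
  have hβ0 : β₀₁ = β₀₂ := by
    apply key ((1 - expit α₀₁) * ξ 0) ((1 - expit (α₀₁ + γ)) * ξ 1) δ _ _
      (mul_nonneg (by linarith [expit_lt_one α₀₁]) (hξ0 0))
      (mul_nonneg (by linarith [expit_lt_one (α₀₁ + γ)]) (hξ0 1))
    · rcases hξor with h | h
      · nlinarith [expit_lt_one α₀₁, expit_lt_one (α₀₁ + γ),
          mul_nonneg (by linarith [expit_lt_one (α₀₁ + γ)] : (0:ℝ) ≤ 1 - expit (α₀₁ + γ)) (hξ0 1)]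
      · nlinarith [expit_lt_one α₀₁, expit_lt_one (α₀₁ + γ),
          mul_nonneg (by linarith [expit_lt_one α₀₁] : (0:ℝ) ≤ 1 - expit α₀₁) (hξ0 0)]
    · nlinarith [h10]
  subst hβ0
  -- Step 3: identify βz using z = 1
  have hβz : β₀₁ + βz₁ = β₀₁ + βz₂ := by
    apply key (expit α₀₁ * ξ 0) (expit (α₀₁ + γ) * ξ 1) δ _ _
      (mul_nonneg (expit_pos α₀₁).le (hξ0 0))
      (mul_nonneg (expit_pos (α₀₁ + γ)).le (hξ0 1))
    · rcases hξor with h | h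
      · nlinarith [expit_pos α₀₁, expit_pos (α₀₁ + γ),
          mul_nonneg (expit_pos (α₀₁ + γ)).le (hξ0 1)]
      · nlinarith [expit_pos α₀₁, expit_pos (α₀₁ + γ),
          mul_nonneg (expit_pos α₀₁).le (hξ0 0)]
    · nlinarith [h11]
  exact ⟨rfl, by linarith, rfl⟩
end

section
/- Let M(t) = ∫ exp(tu) dF(u) be the moment generating function of a probability measure F on ℝ, finite on an interval containing 0, δ, γ, and δ+γ. Given positive observed probabilities L(0,0), L(0,1), L(1,0), L(1,1) summing to 1 that are consistent with the log-linear model, the model parameters are explicitly recovered as: α₀ = log( L(0,1) / (L(0,0)·M(γ)) ), β₀ = log( L(1,0) / (L(0,0)·M(δ)) ), and β_z = log( (L(1,1)·M(δ)·M(γ)) / (L(0,1)·L(1,0)·M(δ+γ)) · L(0,0) ). -/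
open Real MeasureTheory

/-- Explicit recovery of the log-linear model parameters from the observed
likelihood values and the moment generating function `M` of the latent `U`
(conditional on `Y = 0, Z = 0`). -/
theorem parameters_recovered_from_observed_likelihood
    (δ γ β₀ α₀ βz C : ℝ) (hC : 0 < C)
    (F : Measure ℝ) [IsProbabilityMeasure F]
    (hInt : ∀ t ∈ ({0, δ, γ, δ + γ} : Set ℝ),
      Integrable (fun u => Real.exp (t * u)) F)
    (M : ℝ → ℝ) (hM : ∀ t, M t = ∫ u, Real.exp (t * u) ∂F)
    (L : Fin 2 → Fin 2 → ℝ)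
    (hLpos : ∀ y z : Fin 2, 0 < L y z)
    (hLsum : ∑ y : Fin 2, ∑ z : Fin 2, L y z = 1)
    (hL : ∀ y z : Fin 2, L y z =
      (1 / C) * Real.exp (β₀ * y + α₀ * z + βz * y * z) * M (δ * y + γ * z)) :
    α₀ = Real.log (L 0 1 / (L 0 0 * M γ)) ∧
    β₀ = Real.log (L 1 0 / (L 0 0 * M δ)) ∧
    βz = Real.log ((L 1 1 * M δ * M γ) / (L 0 1 * L 1 0 * M (δ + γ)) * L 0 0) := by
  have hMpos : ∀ t ∈ ({0, δ, γ, δ + γ} : Set ℝ), 0 < M t := by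
    intro t ht
    rw [hM t]
    have : Integrable (fun u => Real.exp (t * u)) F := hInt t ht
    exact integral_exp_pos this
  have hM0 : M 0 = 1 := by
    rw [hM 0]
    simp
  have hMδ : 0 < M δ := hMpos δ (by simp)
  have hMγ : 0 < M γ := hMpos γ (by simp)
  have hMδγ : 0 < M (δ + γ) := hMpos (δ + γ) (by simp)
  have h00 := hL 0 0
  have h01 := hL 0 1
  have h10 := hL 1 0
  have h11 := hL 1 1
  simp only [Fin.val_zero, Fin.val_one, Fin.isValue, Nat.cast_zero, Nat.cast_one,
    mul_zero, mul_one, zero_add, add_zero, Real.exp_zero, one_mul, hM0] at h00 h01 h10 h11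
  have hCne : C ≠ 0 := ne_of_gt hC
  constructor
  · rw [h01, h00]
    rw [show (1 / C) * Real.exp α₀ * M γ / (1 / C * M γ) = Real.exp α₀ by
      field_simp]
    rw [Real.log_exp]
  constructor
  · rw [h10, h00]
    rw [show (1 / C) * Real.exp β₀ * M δ / (1 / C * M δ) = Real.exp β₀ by
      field_simp]
    rw [Real.log_exp]
  · rw [h11, h10, h01, h00]
    rw [show (1 / C * Real.exp (β₀ + α₀ + βz) * M (δ + γ) * M δ * M γ) /
        ((1 / C * Real.exp α₀ * M γ) * (1 / C * Real.exp β₀ * M δ) * M (δ + γ)) * (1 / C) =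
        Real.exp βz by
      rw [Real.exp_add, Real.exp_add]
      field_simp]
    rw [Real.log_exp]
end
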